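/- The explicit 3D profile W̄ solves the stationary 3D self-similar Burgers equation: Let W̄ : ℝ³ → ℝ be defined by W̄(y) = B(y̌)^{−1/2} W₁d( B(y̌)^{3/2} y₁ ), where y̌ = (y₂,y₃) and B(y̌) = 1/(1 + y₂² + y₃²). Then W̄ is C^∞ on ℝ³ and for every y ∈ ℝ³ it satisfies −(1/2)W̄(y) + ( (3/2)y₁ + W̄(y) ) ∂_{y₁}W̄(y) + (1/2)y₂ ∂_{y₂}W̄(y) + (1/2)y₃ ∂_{y₃}W̄(y) = 0. -/

import Mathlib

noncomputable section

/-- Points of self-similar space `ℝ³`. -/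
abbrev V3 : Type := Fin 3 → ℝ

/-- Spatial partial derivative `∂ⱼ g` of a scalar function on `ℝ³`. -/
def pdS (j : Fin 3) (g : V3 → ℝ) (x : V3) : ℝ :=
  fderiv ℝ g x (Pi.single j 1 : V3)

/-- The stable self-similar profile of the 1D Burgers equation. -/
def W1d (y : ℝ) : ℝ :=
  (-y / 2 + Real.sqrt (1 / 27 + y ^ 2 / 4)) ^ ((1 : ℝ) / 3)
    - (y / 2 + Real.sqrt (1 / 27 + y ^ 2 / 4)) ^ ((1 : ℝ) / 3)

/-- `B(y̌) = 1/(1 + y₂² + y₃²)`. -/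
def Bf (y : V3) : ℝ := 1 / (1 + y 1 ^ 2 + y 2 ^ 2)

/-- The explicit 3D self-similar Burgers profile
`W̄(y) = B(y̌)^{−1/2} W₁d(B(y̌)^{3/2} y₁)`. -/
def Wbar (y : V3) : ℝ :=
  Bf y ^ (-(1 : ℝ) / 2) * W1d (Bf y ^ ((3 : ℝ) / 2) * y 0)

lemma A_pos (y : ℝ) : 0 < -y / 2 + Real.sqrt (1 / 27 + y ^ 2 / 4) := by
  nlinarith [Real.sq_sqrt (by positivity : (0:ℝ) ≤ 1 / 27 + y ^ 2 / 4),
    Real.sqrt_nonneg (1 / 27 + y ^ 2 / 4),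
    sq_nonneg (Real.sqrt (1 / 27 + y ^ 2 / 4) + y / 2)]

lemma Bpos' (y : ℝ) : 0 < y / 2 + Real.sqrt (1 / 27 + y ^ 2 / 4) := by
  nlinarith [Real.sq_sqrt (by positivity : (0:ℝ) ≤ 1 / 27 + y ^ 2 / 4),
    Real.sqrt_nonneg (1 / 27 + y ^ 2 / 4),
    sq_nonneg (Real.sqrt (1 / 27 + y ^ 2 / 4) - y / 2)]

lemma W1d_cubic (y : ℝ) : W1d y ^ 3 + W1d y + y = 0 := by
  have hs : (Real.sqrt (1 / 27 + y ^ 2 / 4)) ^ 2 = 1 / 27 + y ^ 2 / 4 :=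
    Real.sq_sqrt (by positivity)
  have hA := A_pos y
  have hB := Bpos' y
  set s := Real.sqrt (1 / 27 + y ^ 2 / 4) with hsdef
  set a := (-y / 2 + s) ^ ((1 : ℝ) / 3) with ha
  set b := (y / 2 + s) ^ ((1 : ℝ) / 3) with hb
  have ha3 : a ^ 3 = -y / 2 + s := by
    rw [ha, ← Real.rpow_natCast ((-y / 2 + s) ^ ((1:ℝ)/3)) 3, ← Real.rpow_mul hA.le]
    norm_num
  have hb3 : b ^ 3 = y / 2 + s := by
    rw [hb, ← Real.rpow_natCast ((y / 2 + s) ^ ((1:ℝ)/3)) 3, ← Real.rpow_mul hB.le]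
    norm_num
  have hab : a * b = 1 / 3 := by
    rw [ha, hb, ← Real.mul_rpow hA.le hB.le]
    have h27 : (-y / 2 + s) * (y / 2 + s) = 1 / 27 := by nlinarith [hs]
    rw [h27, show (1:ℝ)/27 = ((1:ℝ)/3) ^ (3:ℕ) by norm_num,
      ← Real.rpow_natCast ((1:ℝ)/3) 3, ← Real.rpow_mul (by norm_num)]
    norm_num
  have hW : W1d y = a - b := rfl
  rw [hW]
  linear_combination ha3 - hb3 - 3 * (a - b) * hab

lemma contDiff_W1d : ContDiff ℝ (⊤ : ℕ∞) W1d := by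
  have hsq : ContDiff ℝ (⊤ : ℕ∞) (fun y : ℝ => Real.sqrt (1 / 27 + y ^ 2 / 4)) := by
    apply ContDiff.sqrt
    · fun_prop (disch := norm_num)
    · intro y; positivity
  have h1 : ContDiff ℝ (⊤ : ℕ∞) (fun y : ℝ => -y / 2 + Real.sqrt (1 / 27 + y ^ 2 / 4)) := by
    fun_prop (disch := norm_num)
  have h2 : ContDiff ℝ (⊤ : ℕ∞) (fun y : ℝ => y / 2 + Real.sqrt (1 / 27 + y ^ 2 / 4)) := by
    fun_prop (disch := norm_num)
  apply ContDiff.sub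
  · exact contDiff_iff_contDiffAt.mpr fun y =>
      (h1.contDiffAt).rpow_const_of_ne (A_pos y).ne'
  · exact contDiff_iff_contDiffAt.mpr fun y =>
      (h2.contDiffAt).rpow_const_of_ne (Bpos' y).ne'

lemma Bf_pos (y : V3) : 0 < Bf y := by unfold Bf; positivity

lemma contDiff_Bf : ContDiff ℝ (⊤ : ℕ∞) Bf := by
  unfold Bf
  apply ContDiff.div contDiff_const
  · fun_prop
  · intro y; positivity

lemma contDiff_Wbar : ContDiff ℝ (⊤ : ℕ∞) Wbar := by
  rw [contDiff_iff_contDiffAt]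
  intro y
  have hB : ContDiffAt ℝ (⊤ : ℕ∞) Bf y := contDiff_Bf.contDiffAt
  have hBne : Bf y ≠ 0 := (Bf_pos y).ne'
  have h1 : ContDiffAt ℝ (⊤ : ℕ∞) (fun z => Bf z ^ (-(1:ℝ)/2)) y :=
    hB.rpow_const_of_ne hBne
  have hx0 : ContDiffAt ℝ (⊤ : ℕ∞) (fun z : V3 => z 0) y :=
    (ContinuousLinearMap.proj (R := ℝ) (φ := fun _ : Fin 3 => ℝ) 0).contDiff.contDiffAt
  have h2 : ContDiffAt ℝ (⊤ : ℕ∞) (fun z => Bf z ^ ((3:ℝ)/2) * z 0) y :=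
    (hB.rpow_const_of_ne hBne).mul hx0
  exact h1.mul (contDiff_W1d.contDiffAt.comp y h2)

lemma Wbar_cubic (y : V3) :
    Wbar y ^ 3 + (1 + y 1 ^ 2 + y 2 ^ 2) * Wbar y + y 0 = 0 := by
  have hB := Bf_pos y
  have hcub := W1d_cubic (Bf y ^ ((3:ℝ)/2) * y 0)
  set c := Bf y with hc
  set w := W1d (c ^ ((3:ℝ)/2) * y 0) with hw
  have h1 : (c ^ (-(1:ℝ)/2)) ^ 3 = c ^ (-(3:ℝ)/2) := by
    rw [← Real.rpow_natCast (c ^ (-(1:ℝ)/2)) 3, ← Real.rpow_mul hB.le]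
    norm_num
  have h2 : c ^ (-(3:ℝ)/2) * c ^ ((3:ℝ)/2) = 1 := by
    rw [← Real.rpow_add hB]; norm_num
  have h4 : (1 + y 1 ^ 2 + y 2 ^ 2) = c ^ (-(1:ℝ)) := by
    rw [Real.rpow_neg_one, hc]
    unfold Bf
    rw [one_div, inv_inv]
  have h3 : c ^ (-(1:ℝ)) * c ^ (-(1:ℝ)/2) = c ^ (-(3:ℝ)/2) := by
    rw [← Real.rpow_add hB]; norm_num
  show (c ^ (-(1:ℝ)/2) * w) ^ 3 + (1 + y 1 ^ 2 + y 2 ^ 2) * (c ^ (-(1:ℝ)/2) * w) + y 0 = 0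
  rw [mul_pow, h1, h4, ← mul_assoc, h3]
  calc c ^ (-(3:ℝ)/2) * w ^ 3 + c ^ (-(3:ℝ)/2) * w + y 0
      = c ^ (-(3:ℝ)/2) * (w ^ 3 + w + c ^ ((3:ℝ)/2) * y 0)
        - (c ^ (-(3:ℝ)/2) * c ^ ((3:ℝ)/2)) * y 0 + y 0 := by ring
    _ = 0 := by rw [hcub, h2]; ring

lemma key_eq (y : V3) (j : Fin 3) :
    (3 * Wbar y ^ 2 + (1 + y 1 ^ 2 + y 2 ^ 2)) * pdS j Wbar y
      + 2 * y 1 * Wbar y * ((Pi.single j 1 : V3) 1)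
      + 2 * y 2 * Wbar y * ((Pi.single j 1 : V3) 2)
      + ((Pi.single j 1 : V3) 0) = 0 := by
  have hW : HasFDerivAt Wbar (fderiv ℝ Wbar y) y :=
    ((contDiff_Wbar.differentiable (by simp)) y).hasFDerivAt
  set L := fderiv ℝ Wbar y with hL
  have h0 : HasFDerivAt (fun z : V3 => z 0)
      (ContinuousLinearMap.proj 0 : V3 →L[ℝ] ℝ) y := hasFDerivAt_apply 0 y
  have h1 : HasFDerivAt (fun z : V3 => z 1)
      (ContinuousLinearMap.proj 1 : V3 →L[ℝ] ℝ) y := hasFDerivAt_apply 1 y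
  have h2 : HasFDerivAt (fun z : V3 => z 2)
      (ContinuousLinearMap.proj 2 : V3 →L[ℝ] ℝ) y := hasFDerivAt_apply 2 y
  have hpow : HasFDerivAt (fun z : V3 => Wbar z ^ 3)
      (((3:ℕ) * Wbar y ^ 2 : ℝ) • L) y := by
    simpa [Function.comp_def] using (hasDerivAt_pow 3 (Wbar y)).comp_hasFDerivAt y hW
  have h1p : HasFDerivAt (fun z : V3 => z 1 ^ 2)
      (((2:ℕ) * y 1 ^ 1 : ℝ) • (ContinuousLinearMap.proj 1 : V3 →L[ℝ] ℝ)) y := by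
    simpa [Function.comp_def] using (hasDerivAt_pow 2 (y 1)).comp_hasFDerivAt y h1
  have h2p : HasFDerivAt (fun z : V3 => z 2 ^ 2)
      (((2:ℕ) * y 2 ^ 1 : ℝ) • (ContinuousLinearMap.proj 2 : V3 →L[ℝ] ℝ)) y := by
    simpa [Function.comp_def] using (hasDerivAt_pow 2 (y 2)).comp_hasFDerivAt y h2
  have hcoef : HasFDerivAt (fun z : V3 => 1 + z 1 ^ 2 + z 2 ^ 2)
      ((0 : V3 →L[ℝ] ℝ) + ((2:ℕ) * y 1 ^ 1 : ℝ) • (ContinuousLinearMap.proj 1 : V3 →L[ℝ] ℝ)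
        + ((2:ℕ) * y 2 ^ 1 : ℝ) • (ContinuousLinearMap.proj 2 : V3 →L[ℝ] ℝ)) y :=
    ((hasFDerivAt_const (1:ℝ) y).add h1p).add h2p
  have hF := (hpow.add (hcoef.mul hW)).add h0
  have hz : HasFDerivAt
      (fun z : V3 => Wbar z ^ 3 + (1 + z 1 ^ 2 + z 2 ^ 2) * Wbar z + z 0)
      (0 : V3 →L[ℝ] ℝ) y := by
    apply (hasFDerivAt_const (0:ℝ) y).congr_of_eventuallyEq
    exact Filter.Eventually.of_forall fun z => Wbar_cubic z
  have hM := hF.unique hz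
  have hMv := congrArg (fun T : V3 →L[ℝ] ℝ => T (Pi.single j 1)) hM
  simp only [ContinuousLinearMap.add_apply, ContinuousLinearMap.smul_apply,
    ContinuousLinearMap.zero_apply, ContinuousLinearMap.proj_apply, smul_eq_mul,
    ContinuousLinearMap.coe_smul', Pi.smul_apply] at hMv
  have hpd : pdS j Wbar y = L (Pi.single j 1) := rfl
  rw [hpd]
  push_cast at hMv
  linarith [hMv]

/-- The explicit profile `W̄` is `C^∞` and solves the stationary 3D self-similar Burgers
equation `−(1/2)W̄ + ((3/2)y₁ + W̄)∂₁W̄ + (1/2)y₂∂₂W̄ + (1/2)y₃∂₃W̄ = 0`. -/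
theorem Wbar_solves_selfsimilar_burgers :
    ContDiff ℝ (⊤ : ℕ∞) Wbar ∧
      ∀ y : V3,
        -(1 / 2) * Wbar y + (3 / 2 * y 0 + Wbar y) * pdS 0 Wbar y
          + 1 / 2 * y 1 * pdS 1 Wbar y + 1 / 2 * y 2 * pdS 2 Wbar y = 0 := by
  refine ⟨contDiff_Wbar, fun y => ?_⟩
  have e0 := key_eq y 0
  have e1 := key_eq y 1
  have e2 := key_eq y 2
  have cub := Wbar_cubic y
  simp only [Pi.single_apply, Fin.ext_iff, show ((0:Fin 3) : ℕ) = 0 from rfl,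
    show ((1:Fin 3) : ℕ) = 1 from rfl, show ((2:Fin 3) : ℕ) = 2 from rfl] at e0 e1 e2
  norm_num at e0 e1 e2
  have hD : (3 * Wbar y ^ 2 + (1 + y 1 ^ 2 + y 2 ^ 2)) ≠ 0 := by positivity
  have key : (3 * Wbar y ^ 2 + (1 + y 1 ^ 2 + y 2 ^ 2)) *
      (-(1 / 2) * Wbar y + (3 / 2 * y 0 + Wbar y) * pdS 0 Wbar y
        + 1 / 2 * y 1 * pdS 1 Wbar y + 1 / 2 * y 2 * pdS 2 Wbar y) = 0 := by
    linear_combination (3 / 2 * y 0 + Wbar y) * e0 + 1 / 2 * y 1 * e1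
      + 1 / 2 * y 2 * e2 - 3 / 2 * cub
  exact (mul_eq_zero.mp key).resolve_left hD
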